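/- Let (φ_λ)_{λ∈Λ}, with Λ finite, be an orthonormal basis of ℝ^n, let Λ = ⋃_{a∈K} Λ_a be a partition of Λ into pairwise disjoint nonempty subsets, let Y ∈ ℝ^n and q_a > 0 for each a ∈ K. Define the data-dependent weights w_a = q_a² / max{q_a, ‖P_a Y‖₂}. Then the block James–Stein estimator β̂ = Σ_{a∈K} Σ_{λ∈Λ_a} (η₂(P_a Y, q_a))_λ φ_λ, where η₂(x, q) = x·max(1 − q²/‖x‖₂², 0), is the unique solution of: minimize ‖β‖₂² over β ∈ ℝ^n subject to ‖P_a(Y − β)‖₂ ≤ w_a for every a ∈ K. -/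

import Mathlib

lemma aux_feas {ι : Type*} (s : Finset ι) (c : ι → ℝ) (q : ℝ) (hq : 0 < q) :
    Real.sqrt (∑ l ∈ s, (c l - c l * max (1 - q^2 / (Real.sqrt (∑ l ∈ s, c l^2))^2) 0)^2)
      ≤ q^2 / max q (Real.sqrt (∑ l ∈ s, c l^2)) := by
  have hA : (0:ℝ) ≤ ∑ l ∈ s, c l ^ 2 := Finset.sum_nonneg fun l _ => sq_nonneg _
  set N := Real.sqrt (∑ l ∈ s, c l ^ 2) with hNdef
  have hN0 : 0 ≤ N := Real.sqrt_nonneg _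
  have hN2 : N ^ 2 = ∑ l ∈ s, c l ^ 2 := Real.sq_sqrt hA
  set m := max (1 - q^2 / N^2) 0 with hmdef
  have hm0 : 0 ≤ m := le_max_right _ _
  have hsum : ∑ l ∈ s, (c l - c l * m)^2 = ((1-m)*N)^2 := by
    have : ∑ l ∈ s, (c l - c l * m)^2 = (1-m)^2 * ∑ l ∈ s, c l ^ 2 := by
      rw [Finset.mul_sum]
      exact Finset.sum_congr rfl fun l _ => by ring
    rw [this, ← hN2]; ring
  rw [hsum, Real.sqrt_sq_eq_abs]
  rcases le_or_gt N q with h | h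
  · have hmax : max q N = q := max_eq_left h
    rw [hmax]
    have hm1 : m ≤ 1 := by
      apply max_le _ zero_le_one
      have : 0 ≤ q^2/N^2 := by positivity
      linarith
    have habs : |(1-m)*N| = (1-m)*N := abs_of_nonneg (mul_nonneg (by linarith) hN0)
    rw [habs]
    have hqq : q^2/q = q := by field_simp [hq.ne']
    rw [hqq]
    nlinarith [mul_nonneg hm0 hN0]
  · have hmax : max q N = N := max_eq_right h.le
    have hNpos : 0 < N := lt_trans hq h
    have hm : m = 1 - q^2/N^2 := max_eq_left (by
      have : q^2 ≤ N^2 := by nlinarith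
      have : q^2/N^2 ≤ 1 := div_le_one_of_le₀ this (by positivity)
      linarith)
    rw [hmax, hm]
    rw [show (1 - (1 - q^2/N^2)) = q^2/N^2 by ring]
    rw [abs_of_nonneg (by positivity)]
    apply le_of_eq
    field_simp

lemma aux_opt {ι : Type*} (s : Finset ι) (c x : ι → ℝ) (q : ℝ) (hq : 0 < q)
    (hx : Real.sqrt (∑ l ∈ s, (c l - x l)^2) ≤ q^2 / max q (Real.sqrt (∑ l ∈ s, c l^2))) :
    (∑ l ∈ s, (c l * max (1 - q^2 / (Real.sqrt (∑ l ∈ s, c l^2))^2) 0)^2)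
      + ∑ l ∈ s, (x l - c l * max (1 - q^2 / (Real.sqrt (∑ l ∈ s, c l^2))^2) 0)^2
      ≤ ∑ l ∈ s, (x l)^2 := by
  have hA : (0:ℝ) ≤ ∑ l ∈ s, c l ^ 2 := Finset.sum_nonneg fun l _ => sq_nonneg _
  set N := Real.sqrt (∑ l ∈ s, c l ^ 2) with hNdef
  have hN0 : 0 ≤ N := Real.sqrt_nonneg _
  have hN2 : N ^ 2 = ∑ l ∈ s, c l ^ 2 := Real.sq_sqrt hA
  set m := max (1 - q^2 / N^2) 0 with hmdef
  have hm0 : 0 ≤ m := le_max_right _ _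
  rcases le_or_gt N q with h | h
  · have hzero : ∀ l ∈ s, c l * m = 0 := by
      intro l hl
      rcases eq_or_lt_of_le hN0 with h0 | h0
      · have hsum0 : ∑ l ∈ s, c l ^ 2 = 0 := by rw [← hN2, ← h0]; ring
        have : c l ^ 2 = 0 :=
          (Finset.sum_eq_zero_iff_of_nonneg (fun l _ => sq_nonneg _)).mp hsum0 l hl
        have : c l = 0 := by nlinarith
        rw [this, zero_mul]
      · have hm' : m = 0 := by
          apply max_eq_right
          have h1 : N^2 ≤ q^2 := by nlinarith
          have h2 : 1 ≤ q^2/N^2 := (one_le_div (by positivity)).mpr h1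
          linarith
        rw [hm', mul_zero]
    have e1 : ∑ l ∈ s, (c l * m)^2 = 0 :=
      Finset.sum_eq_zero fun l hl => by rw [hzero l hl]; ring
    have e2 : ∑ l ∈ s, (x l - c l * m)^2 = ∑ l ∈ s, (x l)^2 :=
      Finset.sum_congr rfl fun l hl => by rw [hzero l hl]; ring
    rw [e1, e2]; linarith
  · have hmax : max q N = N := max_eq_right h.le
    have hNpos : 0 < N := lt_trans hq h
    have hm : m = 1 - q^2/N^2 := max_eq_left (by
      have h1 : q^2 ≤ N^2 := by nlinarith
      have h2 : q^2/N^2 ≤ 1 := div_le_one_of_le₀ h1 (by positivity)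
      linarith)
    rw [hmax] at hx
    have hS0 : (0:ℝ) ≤ ∑ l ∈ s, (c l - x l)^2 := Finset.sum_nonneg fun l _ => sq_nonneg _
    have hw2 : ∑ l ∈ s, (c l - x l)^2 ≤ (q^2/N)^2 := by
      calc ∑ l ∈ s, (c l - x l)^2 = (Real.sqrt (∑ l ∈ s, (c l - x l)^2))^2 :=
            (Real.sq_sqrt hS0).symm
        _ ≤ (q^2/N)^2 := pow_le_pow_left₀ (Real.sqrt_nonneg _) hx 2
    set d : ι → ℝ := fun l => x l - c l * m with hddef
    have hd : ∀ l, d l = x l - c l * m := fun l => rfl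
    set T := ∑ l ∈ s, c l * d l with hTdef
    set D := ∑ l ∈ s, d l ^ 2 with hDdef
    have hD0 : 0 ≤ D := Finset.sum_nonneg fun l _ => sq_nonneg _
    have id1 : ∑ l ∈ s, (c l - x l)^2 = (1-m)^2 * (∑ l ∈ s, c l^2) - 2*(1-m)*T + D := by
      have hpt : ∀ l ∈ s, (c l - x l)^2
          = (1-m)^2 * c l^2 - 2*(1-m)*(c l * d l) + d l^2 := by
        intro l _; rw [hd]; ring
      rw [Finset.sum_congr rfl hpt, Finset.sum_add_distrib, Finset.sum_sub_distrib,
        ← Finset.mul_sum, ← Finset.mul_sum]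
    have id2 : ∑ l ∈ s, (x l)^2 = m^2 * (∑ l ∈ s, c l^2) + 2*m*T + D := by
      have hpt : ∀ l ∈ s, (x l)^2 = m^2 * c l^2 + 2*m*(c l * d l) + d l^2 := by
        intro l _; rw [hd]; ring
      rw [Finset.sum_congr rfl hpt, Finset.sum_add_distrib, Finset.sum_add_distrib,
        ← Finset.mul_sum, ← Finset.mul_sum]
    have id3 : ∑ l ∈ s, (c l * m)^2 = m^2 * (∑ l ∈ s, c l^2) := by
      rw [Finset.mul_sum]; exact Finset.sum_congr rfl fun l _ => by ring
    have h1m : (1-m)^2 * (∑ l ∈ s, c l^2) = (q^2/N)^2 := by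
      rw [hm, ← hN2]; field_simp; ring
    have h1mpos : 0 < 1 - m := by
      have hpos : 0 < q^2/N^2 := by positivity
      rw [hm]; linarith
    have hT : 0 ≤ T := by nlinarith [hw2, id1, h1m]
    have e4 : ∑ l ∈ s, (x l - c l * m)^2 = D := rfl
    linarith [id2, id3, e4, mul_nonneg hm0 hT]


/-- Variational characterization of the block James–Stein estimator: for an orthonormal basis
`(φ_λ)_{λ∈Λ}` of `ℝ^n`, a partition `Λ = ⋃_{a∈K} Λ_a` into pairwise disjoint nonempty blocks,
data `Y`, thresholds `q_a > 0` and data-dependent weights `w_a = q_a² / max{q_a, ‖P_a Y‖₂}`,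
the block James–Stein estimator `β̂ = Σ_a Σ_{λ∈Λ_a} (η₂(P_a Y, q_a))_λ φ_λ`
(with `η₂(x,q) = x·max(1 − q²/‖x‖₂², 0)`) is the unique solution of:
minimize `‖β‖₂²` subject to `‖P_a(Y − β)‖₂ ≤ w_a` for all `a`. -/
theorem block_james_stein_variational {n : ℕ} {Λ K : Type*} [Fintype Λ] [Fintype K]
    (φ : OrthonormalBasis Λ ℝ (EuclideanSpace ℝ (Fin n)))
    (Blk : K → Finset Λ)
    (hdisj : ∀ a a' : K, a ≠ a' → Disjoint (Blk a) (Blk a'))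
    (hne : ∀ a : K, (Blk a).Nonempty)
    (hcover : ∀ l : Λ, ∃ a : K, l ∈ Blk a)
    (Y : EuclideanSpace ℝ (Fin n)) (q : K → ℝ) (hq : ∀ a, 0 < q a)
    -- `Pnorm a v = ‖P_a v‖₂`, the Euclidean norm of the block of coefficients of `v`
    (Pnorm : K → EuclideanSpace ℝ (Fin n) → ℝ)
    (hPnorm : ∀ (a : K) (v : EuclideanSpace ℝ (Fin n)),
      Pnorm a v = Real.sqrt (∑ l ∈ Blk a, (inner ℝ (φ l) v : ℝ) ^ 2))
    (w : K → ℝ) (hw : ∀ a : K, w a = q a ^ 2 / max (q a) (Pnorm a Y))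
    (βhat : EuclideanSpace ℝ (Fin n))
    (hβhat : βhat = ∑ a : K, ∑ l ∈ Blk a,
      ((inner ℝ (φ l) Y : ℝ) * max (1 - q a ^ 2 / (Pnorm a Y) ^ 2) 0) • φ l) :
    (∀ a : K, Pnorm a (Y - βhat) ≤ w a) ∧
    ∀ β : EuclideanSpace ℝ (Fin n),
      (∀ a : K, Pnorm a (Y - β) ≤ w a) → β ≠ βhat →
      ‖βhat‖ ^ 2 < ‖β‖ ^ 2 := by
  classical
  have horth := orthonormal_iff_ite.mp φ.orthonormal
  set c : Λ → ℝ := fun l => inner ℝ (φ l) Y with hcdef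
  have hc : ∀ l, c l = inner ℝ (φ l) Y := fun _ => rfl
  have hN : ∀ a, Pnorm a Y = Real.sqrt (∑ l ∈ Blk a, c l ^ 2) := fun a => hPnorm a Y
  -- coefficient of βhat
  have hbhat : ∀ a : K, ∀ l ∈ Blk a,
      (inner ℝ (φ l) βhat : ℝ)
        = c l * max (1 - q a ^ 2 / (Real.sqrt (∑ l' ∈ Blk a, c l' ^ 2)) ^ 2) 0 := by
    intro a₀ l hl
    rw [hβhat, inner_sum]
    have hterm : ∀ a : K,
        (inner ℝ (φ l) (∑ l' ∈ Blk a,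
          ((inner ℝ (φ l') Y : ℝ) * max (1 - q a ^ 2 / (Pnorm a Y) ^ 2) 0) • φ l') : ℝ)
        = if l ∈ Blk a then c l * max (1 - q a ^ 2 / (Pnorm a Y) ^ 2) 0 else 0 := by
      intro a
      rw [inner_sum]
      have : ∀ l' ∈ Blk a,
          (inner ℝ (φ l) (((inner ℝ (φ l') Y : ℝ) * max (1 - q a ^ 2 / (Pnorm a Y) ^ 2) 0) • φ l') : ℝ)
          = if l = l' then c l' * max (1 - q a ^ 2 / (Pnorm a Y) ^ 2) 0 else 0 := by
        intro l' _
        rw [real_inner_smul_right, horth l l']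
        by_cases h : l = l' <;> simp [h, hc]
      rw [Finset.sum_congr rfl this, Finset.sum_ite_eq]
    rw [Finset.sum_congr rfl fun a _ => hterm a]
    rw [Finset.sum_eq_single a₀]
    · rw [if_pos hl, hN a₀]
    · intro a _ hne'
      exact if_neg fun hmem => (Finset.disjoint_left.mp (hdisj a a₀ hne') hmem) hl
    · intro h; exact absurd (Finset.mem_univ a₀) h
  -- partition sum
  have hsplit : ∀ g : Λ → ℝ, ∑ l : Λ, g l = ∑ a : K, ∑ l ∈ Blk a, g l := by
    intro g
    have huniv : (Finset.univ : Finset Λ) = Finset.univ.biUnion Blk := by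
      ext l; simpa using hcover l
    rw [huniv, Finset.sum_biUnion (fun a _ a' _ hne' => hdisj a a' hne')]
  -- Parseval
  have hparseval : ∀ v : EuclideanSpace ℝ (Fin n),
      ‖v‖ ^ 2 = ∑ l : Λ, (inner ℝ (φ l) v : ℝ) ^ 2 := by
    intro v
    rw [show ‖v‖ = ‖φ.repr v‖ from (φ.repr.norm_map v).symm, EuclideanSpace.norm_eq,
      Real.sq_sqrt (Finset.sum_nonneg fun _ _ => sq_nonneg _)]
    exact Finset.sum_congr rfl fun l _ => by
      rw [Real.norm_eq_abs, sq_abs, φ.repr_apply_apply]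
  constructor
  · -- feasibility
    intro a
    have e1 : Pnorm a (Y - βhat)
        = Real.sqrt (∑ l ∈ Blk a,
            (c l - c l * max (1 - q a ^ 2 / (Real.sqrt (∑ l' ∈ Blk a, c l' ^ 2)) ^ 2) 0) ^ 2) := by
      rw [hPnorm a (Y - βhat)]
      congr 1
      refine Finset.sum_congr rfl fun l hl => ?_
      rw [inner_sub_right, hbhat a l hl, ← hc]
    rw [e1, hw a, hN a]
    exact aux_feas (Blk a) c (q a) (hq a)
  · -- optimality
    intro β hfeas hne'
    set x : Λ → ℝ := fun l => inner ℝ (φ l) β with hxdef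
    have hx : ∀ l, x l = inner ℝ (φ l) β := fun _ => rfl
    have key : ∀ a : K,
        (∑ l ∈ Blk a, (inner ℝ (φ l) βhat : ℝ) ^ 2)
          + ∑ l ∈ Blk a, (x l - (inner ℝ (φ l) βhat : ℝ)) ^ 2
        ≤ ∑ l ∈ Blk a, (x l) ^ 2 := by
      intro a
      have hcon := hfeas a
      rw [hPnorm a (Y - β), hw a, hN a] at hcon
      have hcon' : Real.sqrt (∑ l ∈ Blk a, (c l - x l) ^ 2)
          ≤ q a ^ 2 / max (q a) (Real.sqrt (∑ l ∈ Blk a, c l ^ 2)) := by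
        have e2 : ∑ l ∈ Blk a, ((inner ℝ (φ l) (Y - β) : ℝ)) ^ 2
            = ∑ l ∈ Blk a, (c l - x l) ^ 2 :=
          Finset.sum_congr rfl fun l _ => by rw [inner_sub_right, ← hc, ← hx]
        rwa [e2] at hcon
      have := aux_opt (Blk a) c x (q a) (hq a) hcon'
      have eA : ∑ l ∈ Blk a, (inner ℝ (φ l) βhat : ℝ) ^ 2
          = ∑ l ∈ Blk a,
              (c l * max (1 - q a ^ 2 / (Real.sqrt (∑ l' ∈ Blk a, c l' ^ 2)) ^ 2) 0) ^ 2 :=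
        Finset.sum_congr rfl fun l hl => by rw [hbhat a l hl]
      have eB : ∑ l ∈ Blk a, (x l - (inner ℝ (φ l) βhat : ℝ)) ^ 2
          = ∑ l ∈ Blk a,
              (x l - c l * max (1 - q a ^ 2 / (Real.sqrt (∑ l' ∈ Blk a, c l' ^ 2)) ^ 2) 0) ^ 2 :=
        Finset.sum_congr rfl fun l hl => by rw [hbhat a l hl]
      rw [eA, eB]
      exact this
    have hsumkey := Finset.sum_le_sum (fun a (_ : a ∈ (Finset.univ : Finset K)) => key a)
    rw [Finset.sum_add_distrib] at hsumkey
    have eb : ‖βhat‖ ^ 2 = ∑ a : K, ∑ l ∈ Blk a, (inner ℝ (φ l) βhat : ℝ) ^ 2 := by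
      rw [hparseval βhat]; exact hsplit _
    have ex : ‖β‖ ^ 2 = ∑ a : K, ∑ l ∈ Blk a, (x l) ^ 2 := by
      rw [hparseval β]; exact hsplit _
    have ed : ‖β - βhat‖ ^ 2
        = ∑ a : K, ∑ l ∈ Blk a, (x l - (inner ℝ (φ l) βhat : ℝ)) ^ 2 := by
      rw [hparseval (β - βhat), hsplit fun l => (inner ℝ (φ l) (β - βhat) : ℝ) ^ 2]
      exact Finset.sum_congr rfl fun a _ => Finset.sum_congr rfl fun l _ => by
        rw [inner_sub_right, ← hx]
    have hdpos : 0 < ‖β - βhat‖ ^ 2 := by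
      have : β - βhat ≠ 0 := sub_ne_zero_of_ne hne'
      exact pow_pos (norm_pos_iff.mpr this) 2
    rw [eb, ex]
    rw [← eb, ← ed, ← ex] at hsumkey
    linarith
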